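/- Let F be a field with char F = 2 and more than two elements, and let · be a bilinear multiplication on F × F that is not identically zero and is curled (for every x there exists λ ∈ F with x·x = λ • x). Then (F × F, ·) is isomorphic to exactly one of the following algebras, given by their matrices of structure constants: ((1, 1, 0, 0), (0, 1, 0, 1)); ((α1, 0, 0, 0), (0, 1, 1+α1, 0)) for some α1 ∈ F; or ((1, 0, 0, 0), (0, 0, 1, 0)). Here 'exactly one' means in addition that no two distinct algebras of this list (in particular for distinct values of α1) are isomorphic to each other. -/

import Mathlib

/-- The bilinear multiplication on `F × F` determined by the matrix of structure
constants `((a1, a2, a3, a4), (b1, b2, b3, b4))`. -/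
def scMul {F : Type*} [Field F] (a1 a2 a3 a4 b1 b2 b3 b4 : F) (x y : F × F) : F × F :=
  (a1 * x.1 * y.1 + a2 * x.1 * y.2 + a3 * x.2 * y.1 + a4 * x.2 * y.2,
   b1 * x.1 * y.1 + b2 * x.1 * y.2 + b3 * x.2 * y.1 + b4 * x.2 * y.2)

/-- A multiplication `m` on `F × F` is endo-commutative if `(x·x)·(y·y) = (x·y)·(x·y)`. -/
def IsEndoCommutative {F : Type*} [Field F] (m : F × F → F × F → F × F) : Prop :=
  ∀ x y : F × F, m (m x x) (m y y) = m (m x y) (m x y)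

/-- A multiplication `m` on `F × F` is curled if every square `x·x` is a scalar
multiple of `x`. -/
def IsCurled {F : Type*} [Field F] (m : F × F → F × F → F × F) : Prop :=
  ∀ x : F × F, ∃ lam : F, m x x = lam • x

/-- `m` is bilinear (linear in each argument). -/
def IsBilinearMul {F : Type*} [Field F] (m : F × F → F × F → F × F) : Prop :=
  (∀ (a : F) (x x' y : F × F), m (a • x + x') y = a • m x y + m x' y) ∧
  (∀ (a : F) (x y y' : F × F), m x (a • y + y') = a • m x y + m x y')

/-- Two multiplications on `F × F` are isomorphic if some `F`-linear
equivalence `g` of `F × F` satisfies `g (x·y) = g x ∘ g y`. -/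
def AlgIso {F : Type*} [Field F] (m₁ m₂ : F × F → F × F → F × F) : Prop :=
  ∃ g : (F × F) ≃ₗ[F] F × F, ∀ x y, g (m₁ x y) = m₂ (g x) (g y)

/-- The list of curled algebras of Theorem 7 (char F = 2, F ≠ ℤ/2ℤ):
`Sum.inr true` is `A₁,₂(1,1,0,0)`, `Sum.inl a1` is `A₃,₂(a1, 0, 1)`, and
`Sum.inr false` is `A₆,₂(1, 0)`. -/
def curledFamily2 {F : Type*} [Field F] : F ⊕ Bool → (F × F → F × F → F × F)
  | Sum.inr true => scMul 1 1 0 0 0 1 0 1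
  | Sum.inl a1 => scMul a1 0 0 0 0 1 (1 + a1) 0
  | Sum.inr false => scMul 1 0 0 0 0 0 1 0

section Aux

variable {F : Type*} [Field F]

/-- The general curled multiplication with parameters `p q r s`. -/
def curM (p q r s : F) : F × F → F × F → F × F := scMul (r + s) p q 0 0 r s (p + q)

lemma algIso_symm {m₁ m₂ : F × F → F × F → F × F} (h : AlgIso m₁ m₂) : AlgIso m₂ m₁ := by
  obtain ⟨g, hg⟩ := h
  refine ⟨g.symm, fun x y => ?_⟩
  apply g.injective
  rw [g.apply_symm_apply, hg, g.apply_symm_apply, g.apply_symm_apply]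

lemma algIso_trans {m₁ m₂ m₃ : F × F → F × F → F × F} (h1 : AlgIso m₁ m₂)
    (h2 : AlgIso m₂ m₃) : AlgIso m₁ m₃ := by
  obtain ⟨g1, hg1⟩ := h1
  obtain ⟨g2, hg2⟩ := h2
  refine ⟨g1.trans g2, fun x y => ?_⟩
  simp only [LinearEquiv.trans_apply, hg1, hg2]

/-- linear equivalence of `F × F` from an invertible 2×2 matrix. -/
def lequiv (a b c d : F) (h : a * d - b * c ≠ 0) : (F × F) ≃ₗ[F] F × F where
  toFun x := (a * x.1 + c * x.2, b * x.1 + d * x.2)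
  invFun y := ((d * y.1 - c * y.2) / (a * d - b * c), (a * y.2 - b * y.1) / (a * d - b * c))
  left_inv x := by
    obtain ⟨x1, x2⟩ := x
    apply Prod.ext
    · simp only [div_eq_mul_inv]; linear_combination x1 * mul_inv_cancel₀ h
    · simp only [div_eq_mul_inv]; linear_combination x2 * mul_inv_cancel₀ h
  right_inv y := by
    obtain ⟨y1, y2⟩ := y
    apply Prod.ext
    · simp only [div_eq_mul_inv]; linear_combination y1 * mul_inv_cancel₀ h
    · simp only [div_eq_mul_inv]; linear_combination y2 * mul_inv_cancel₀ h
  map_add' x y := by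
    apply Prod.ext <;> (simp only [Prod.fst_add, Prod.snd_add]; ring)
  map_smul' t x := by
    apply Prod.ext <;>
      (simp only [Prod.smul_fst, Prod.smul_snd, smul_eq_mul, RingHom.id_apply]; ring)

@[simp] lemma lequiv_apply (a b c d : F) (h : a * d - b * c ≠ 0) (x : F × F) :
    lequiv a b c d h x = (a * x.1 + c * x.2, b * x.1 + d * x.2) := rfl

/-- The fundamental construction: transporting `curM P Q R S` along the matrix
`(a c; b d)`. -/
lemma curM_iso (a b c d P Q R S : F) (h : a * d - b * c ≠ 0) :
    AlgIso (curM (d * P + c * S) (d * Q + c * R) (b * Q + a * R) (b * P + a * S))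
      (curM P Q R S) := by
  refine ⟨lequiv a b c d h, fun x y => ?_⟩
  obtain ⟨x1, x2⟩ := x
  obtain ⟨y1, y2⟩ := y
  apply Prod.ext <;> (simp [curM, scMul]; ring)

/-- Extraction: any isomorphism of curled multiplications yields explicit matrix
relations between the parameters. -/
lemma curM_extract {p q r s p' q' r' s' : F}
    (h : AlgIso (curM p q r s) (curM p' q' r' s')) :
    ∃ a b c d : F, a * d - b * c ≠ 0 ∧
      (a * d - b * c) * p' = a * p - c * s ∧
      (a * d - b * c) * q' = a * q - c * r ∧
      (a * d - b * c) * r' = d * r - b * q ∧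
      (a * d - b * c) * s' = d * s - b * p := by
  obtain ⟨g, hg⟩ := h
  set a := (g (1, 0)).1 with ha
  set b := (g (1, 0)).2 with hb
  set c := (g (0, 1)).1 with hc
  set d := (g (0, 1)).2 with hd
  have key : ∀ v : F × F, g v = (a * v.1 + c * v.2, b * v.1 + d * v.2) := by
    intro v
    have hv : v = v.1 • ((1 : F), (0 : F)) + v.2 • ((0 : F), (1 : F)) := by
      apply Prod.ext <;> simp
    conv_lhs => rw [hv]
    rw [map_add, map_smul, map_smul]
    apply Prod.ext <;>
      (simp only [Prod.fst_add, Prod.snd_add, Prod.smul_fst, Prod.smul_snd, smul_eq_mul]; ring)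
  have hD : a * d - b * c ≠ 0 := by
    intro h0
    have h1 : g (d, -b) = 0 := by
      rw [key (d, -b)]
      apply Prod.ext <;> simp only [Prod.fst_zero, Prod.snd_zero]
      · linear_combination h0
      · ring
    have h2 : ((d : F), -b) = 0 := g.map_eq_zero_iff.mp h1
    have hd0 : d = 0 := congrArg Prod.fst h2
    have hb0 : b = 0 := by
      have := congrArg Prod.snd h2
      simp only [Prod.snd_zero, neg_eq_zero] at this
      exact this
    obtain ⟨v, hv⟩ := g.surjective (0, 1)
    have := congrArg Prod.snd hv
    rw [key v] at this
    simp only [hb0, hd0, zero_mul, add_zero] at this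
    exact one_ne_zero this.symm
  have hgx : g ((d : F), -b) = (a * d - b * c, 0) := by
    rw [key]
    apply Prod.ext <;> (simp only; ring)
  have hgy : g ((-c : F), a) = (0, a * d - b * c) := by
    rw [key]
    apply Prod.ext <;> (simp only; ring)
  have e1 := hg ((d : F), -b) ((-c : F), a)
  rw [hgx, hgy, key] at e1
  have e2 := hg ((-c : F), a) ((d : F), -b)
  rw [hgx, hgy, key] at e2
  have e1a := congrArg Prod.fst e1
  have e1b := congrArg Prod.snd e1
  have e2a := congrArg Prod.fst e2
  have e2b := congrArg Prod.snd e2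
  simp only [curM, scMul] at e1a e1b e2a e2b
  refine ⟨a, b, c, d, hD, ?_, ?_, ?_, ?_⟩
  · apply mul_left_cancel₀ hD; linear_combination -e1a
  · apply mul_left_cancel₀ hD; linear_combination -e2a
  · apply mul_left_cancel₀ hD; linear_combination -e1b
  · apply mul_left_cancel₀ hD; linear_combination -e2b

/-- The determinant invariant: `p*r - s*q` rescales under isomorphism. -/
lemma det_rel {p q r s p' q' r' s' : F}
    (h : AlgIso (curM p q r s) (curM p' q' r' s')) :
    ∃ D : F, D ≠ 0 ∧ D * (p' * r' - s' * q') = p * r - s * q := by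
  obtain ⟨a, b, c, d, hD, R1, R2, R3, R4⟩ := curM_extract h
  refine ⟨a * d - b * c, hD, ?_⟩
  apply mul_left_cancel₀ hD
  linear_combination ((a * d - b * c) * r') * R1 + (a * p - c * s) * R3
    - ((a * d - b * c) * q') * R4 - (d * s - b * p) * R2

/-- Any bilinear curled multiplication over a field with more than 2 elements
has the `curM` form. -/
lemma exists_curM (hcard : ∃ c : F, c ≠ 0 ∧ c ≠ 1)
    {m : F × F → F × F → F × F} (hbil : IsBilinearMul m) (hcur : IsCurled m) :
    ∃ p q r s : F, m = curM p q r s := by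
  obtain ⟨hL, hR⟩ := hbil
  have hz : ∀ y : F × F, m 0 y = 0 := by
    intro y
    simpa using hL (-1) 0 0 y
  have hz' : ∀ x : F × F, m x 0 = 0 := by
    intro x
    simpa using hR (-1) x 0 0
  have hexp : ∀ x1 x2 y1 y2 : F, m (x1, x2) (y1, y2) =
      (x1 * y1) • m (1, 0) (1, 0) + (x1 * y2) • m (1, 0) (0, 1)
        + (x2 * y1) • m (0, 1) (1, 0) + (x2 * y2) • m (0, 1) (0, 1) := by
    intro x1 x2 y1 y2
    have hxx : ((x1 : F), (x2 : F)) = x1 • ((1 : F), (0 : F)) + x2 • ((0 : F), (1 : F)) := by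
      apply Prod.ext <;> simp
    have hyy : ((y1 : F), (y2 : F)) = y1 • ((1 : F), (0 : F)) + y2 • ((0 : F), (1 : F)) := by
      apply Prod.ext <;> simp
    have hrow : ∀ x : F × F, m x (y1, y2) = y1 • m x (1, 0) + y2 • m x (0, 1) := by
      intro x
      have h1 := hR y1 x ((1 : F), (0 : F)) (y2 • ((0 : F), (1 : F)))
      have h2 := hR y2 x ((0 : F), (1 : F)) 0
      rw [add_zero, hz', add_zero] at h2
      conv_lhs => rw [hyy]
      rw [h1, h2]
    have h1 := hL x1 ((1 : F), (0 : F)) (x2 • ((0 : F), (1 : F))) ((y1 : F), (y2 : F))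
    have h2 := hL x2 ((0 : F), (1 : F)) 0 ((y1 : F), (y2 : F))
    rw [add_zero, hz, add_zero] at h2
    conv_lhs => rw [hxx]
    rw [h1, h2, hrow, hrow]
    simp only [smul_add, smul_smul]
    module
  obtain ⟨l1, h11⟩ := hcur (1, 0)
  obtain ⟨l2, h22⟩ := hcur (0, 1)
  set P := (m (1, 0) (0, 1)).1 with hPdef
  set R := (m (1, 0) (0, 1)).2 with hRdef
  set Q := (m (0, 1) (1, 0)).1 with hQdef
  set S := (m (0, 1) (1, 0)).2 with hSdef
  have e12 : m (1, 0) (0, 1) = (P, R) := rfl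
  have e21 : m (0, 1) (1, 0) = (Q, S) := rfl
  have hkey : ∀ t : F, t ≠ 0 → (R + S) + t * l2 = l1 + t * (P + Q) := by
    intro t ht
    obtain ⟨lam, hlam⟩ := hcur (1, t)
    rw [hexp 1 t 1 t, h11, e12, e21, h22] at hlam
    have h1 := congrArg Prod.fst hlam
    have h2 := congrArg Prod.snd hlam
    simp only [Prod.fst_add, Prod.snd_add, Prod.smul_fst, Prod.smul_snd, smul_eq_mul] at h1 h2
    apply mul_left_cancel₀ ht
    linear_combination h2 - t * h1
  obtain ⟨cc, hc0, hc1⟩ := hcard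
  have k1 := hkey 1 one_ne_zero
  have kc := hkey cc hc0
  have hcc1 : cc - 1 ≠ 0 := sub_ne_zero_of_ne hc1
  have hl2 : l2 = P + Q := by
    apply mul_left_cancel₀ hcc1
    linear_combination kc - k1
  have hl1 : l1 = R + S := by linear_combination hl2 - k1
  refine ⟨P, Q, R, S, ?_⟩
  funext x y
  obtain ⟨x1, x2⟩ := x
  obtain ⟨y1, y2⟩ := y
  rw [hexp x1 x2 y1 y2, h11, e12, e21, h22, hl1, hl2]
  apply Prod.ext <;>
    (simp only [curM, scMul, Prod.fst_add, Prod.snd_add, Prod.smul_fst, Prod.smul_snd,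
      smul_eq_mul]; simp; ring)

end Aux

/-- over a field of characteristic 2 with more than two elements,
any nonzero bilinear curled multiplication on `F × F` is isomorphic to exactly
one member of `curledFamily2`, and the members of `curledFamily2` are pairwise
non-isomorphic. -/
theorem stmt_15 {F : Type*} [Field F] (h2 : ringChar F = 2)
    (hcard : ∃ c : F, c ≠ 0 ∧ c ≠ 1)
    (m : F × F → F × F → F × F) (hbil : IsBilinearMul m)
    (hnz : ¬ ∀ x y, m x y = 0) (hcur : IsCurled m) :
    (∃! i : F ⊕ Bool, AlgIso m (curledFamily2 i)) ∧
      ∀ i j : F ⊕ Bool, i ≠ j → ¬ AlgIso (curledFamily2 i) (curledFamily2 j) := by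
  have h2' : (2 : F) = 0 := by
    have := ringChar.Nat.cast_ringChar (R := F)
    rw [h2] at this
    exact_mod_cast this
  -- family members in curM form
  have famA : curledFamily2 (F := F) (Sum.inr true) = curM 1 0 1 0 := by
    show scMul 1 1 0 0 0 1 0 1 = _
    unfold curM
    norm_num
  have famC : curledFamily2 (F := F) (Sum.inr false) = curM 0 0 0 1 := by
    show scMul 1 0 0 0 0 0 1 0 = _
    unfold curM
    norm_num
  have famB : ∀ x : F, curledFamily2 (Sum.inl x) = curM 0 0 1 (1 + x) := by
    intro x
    show scMul x 0 0 0 0 1 (1 + x) 0 = _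
    unfold curM
    rw [show (1 : F) + (1 + x) = x from by linear_combination h2']
    norm_num
  -- pairwise non-isomorphism
  have pairwise : ∀ i j : F ⊕ Bool, i ≠ j →
      ¬ AlgIso (curledFamily2 i) (curledFamily2 j) := by
    intro i j hij hiso
    rcases i with x | bi <;> rcases j with y | bj
    · -- B x vs B y
      have hxy : x ≠ y := fun h => hij (by rw [h])
      rw [famB x, famB y] at hiso
      obtain ⟨a, b, c, d, hD, R1, R2, R3, R4⟩ := curM_extract hiso
      apply hxy
      have hd' : d = a * d - b * c := by linear_combination -R3
      have h5 : (a * d - b * c) * (1 + y) = (a * d - b * c) * (1 + x) := by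
        linear_combination R4 + (1 + x) * hd'
      have h6 := mul_left_cancel₀ hD h5
      linear_combination -h6
    · cases bj
      · -- B x vs C
        rw [famB x, famC] at hiso
        obtain ⟨a, b, c, d, hD, R1, R2, R3, R4⟩ := curM_extract hiso
        apply hD
        have hd0 : d = 0 := by linear_combination -R3
        have hc0 : c = 0 := by linear_combination R2
        linear_combination a * hd0 - b * hc0
      · -- B x vs A
        rw [famB x, famA] at hiso
        obtain ⟨D, hD, hrel⟩ := det_rel hiso
        exact hD (by linear_combination hrel)
    · cases bi
      · -- C vs B y
        rw [famC, famB y] at hiso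
        obtain ⟨a, b, c, d, hD, R1, R2, R3, R4⟩ := curM_extract hiso
        exact hD (by linear_combination R3)
      · -- A vs B y
        rw [famA, famB y] at hiso
        obtain ⟨D, hD, hrel⟩ := det_rel hiso
        exact one_ne_zero (α := F) (by linear_combination -hrel)
    · cases bi <;> cases bj
      · exact hij rfl
      · -- C vs A
        rw [famC, famA] at hiso
        obtain ⟨D, hD, hrel⟩ := det_rel hiso
        exact hD (by linear_combination hrel)
      · -- A vs C
        rw [famA, famC] at hiso
        obtain ⟨D, hD, hrel⟩ := det_rel hiso
        exact one_ne_zero (α := F) (by linear_combination -hrel)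
      · exact hij rfl
  -- existence
  obtain ⟨p, q, r, s, hm⟩ := exists_curM hcard hbil hcur
  have h4 : ¬(p = 0 ∧ q = 0 ∧ r = 0 ∧ s = 0) := by
    rintro ⟨rfl, rfl, rfl, rfl⟩
    apply hnz
    intro x y
    rw [hm]
    simp [curM, scMul, Prod.ext_iff]
  have hex : ∃ i, AlgIso m (curledFamily2 i) := by
    by_cases hA : p * r - s * q = 0
    · by_cases hq : q = 0
      · subst hq
        by_cases hr : r = 0
        · subst hr
          refine ⟨Sum.inr false, ?_⟩
          rw [hm, famC]
          by_cases hp : p = 0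
          · have hs : s ≠ 0 := fun h0 => h4 ⟨hp, rfl, rfl, h0⟩
            have h := curM_iso s 0 p 1 0 0 0 1 (by simpa using hs)
            simpa using h
          · have h := curM_iso s (-1) p 0 0 0 0 1 (by simpa using hp)
            simpa using h
        · have hp0 : p = 0 := by
            have hpr : p * r = 0 := by linear_combination hA
            exact (mul_eq_zero.mp hpr).resolve_right hr
          refine ⟨Sum.inl (s * r⁻¹ - 1), ?_⟩
          rw [hm, famB]
          rw [show (1 : F) + (s * r⁻¹ - 1) = s * r⁻¹ from by ring]
          have h := curM_iso r 0 0 1 0 0 1 (s * r⁻¹) (by simpa using hr)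
          have hs : r * (s * r⁻¹) = s := by field_simp
          simpa [hp0, hs] using h
      · refine ⟨Sum.inl (p * q⁻¹ - 1), ?_⟩
        rw [hm, famB]
        rw [show (1 : F) + (p * q⁻¹ - 1) = p * q⁻¹ from by ring]
        have h := curM_iso r (-1) q 0 0 0 1 (p * q⁻¹) (by simpa using hq)
        have hp : q * (p * q⁻¹) = p := by field_simp
        have hs : r * (p * q⁻¹) = s := by
          field_simp
          linear_combination hA
        simpa [hp, hs] using h
    · refine ⟨Sum.inr true, ?_⟩
      rw [hm, famA]
      have h := curM_iso r s q p 1 0 1 0 (by rw [mul_comm r p]; exact hA)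
      simpa using h
  obtain ⟨i, hi⟩ := hex
  refine ⟨⟨i, hi, fun j hj => ?_⟩, pairwise⟩
  by_contra hne
  exact pairwise j i hne (algIso_trans (algIso_symm hj) hi)
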